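/- Suppose (R,m) is a complete Noetherian local ring, I an ideal of R, and {P_i} for i in the positive integers is a countable collection of prime ideals of R, none of which contains I. Then there exists an element x in I which is not contained in P_i for all i. -/

import Mathlib

open CategoryTheory

noncomputable section

universe u

/-- The Krull dimension of a module: `dim R/ann(M)`. -/
def moduleDim (R : Type u) [CommRing R] (M : Type*) [AddCommGroup M] [Module R M] :
    WithBot (WithTop ℕ) :=
  ringKrullDim (R ⧸ Module.annihilator R M)

/-- The depth of `M` with respect to an ideal `J`: the supremum of the lengths of
`M`-regular sequences consisting of elements of `J`. -/
def moduleDepth (R : Type u) [CommRing R] (J : Ideal R) (M : Type*) [AddCommGroup M]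
    [Module R M] : ℕ∞ :=
  sSup {n : ℕ∞ | ∃ rs : List R, (rs.length : ℕ∞) = n ∧ (∀ r ∈ rs, r ∈ J) ∧
    RingTheory.Sequence.IsRegular M rs}

/-- Serre's condition `S_ℓ` : for every prime `p` in the support of `M`,
`depth M_p ≥ min (ℓ, dim M_p)`. -/
def SerreCondition (R : Type u) [CommRing R] (ℓ : ℕ) (M : Type u) [AddCommGroup M]
    [Module R M] : Prop :=
  ∀ p ∈ Module.support R M,
    min ((ℓ : ℕ∞) : WithBot ℕ∞)
        (moduleDim (Localization.AtPrime p.asIdeal) (LocalizedModule p.asIdeal.primeCompl M)) ≤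
      ((moduleDepth (Localization.AtPrime p.asIdeal)
          (IsLocalRing.maximalIdeal (Localization.AtPrime p.asIdeal))
          (LocalizedModule p.asIdeal.primeCompl M) : ℕ∞) : WithBot ℕ∞)

/-- A module `N` over `S` is `J`-cofinite if its support is contained in `V(J)` and all the
modules `Ext^i_S(S/J, N)` are finitely generated. -/
def IsCofinite (S : Type u) [CommRing S] (J : Ideal S) (N : ModuleCat.{u} S) : Prop :=
  Module.support S N ⊆ PrimeSpectrum.zeroLocus (J : Set S) ∧
  ∀ i : ℕ, Module.Finite S
    (((Ext S (ModuleCat.{u} S) i).obj (Opposite.op (ModuleCat.of S (S ⧸ J)))).obj N)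

/-- A ring is catenary if any two saturated chains of primes with the same endpoints have
the same length. -/
def IsCatenaryRing (R : Type u) [CommRing R] : Prop :=
  ∀ c₁ c₂ : LTSeries (PrimeSpectrum R),
    c₁.head = c₂.head → c₁.last = c₂.last →
    (∀ i : Fin c₁.length, c₁.toFun i.castSucc ⋖ c₁.toFun i.succ) →
    (∀ i : Fin c₂.length, c₂.toFun i.castSucc ⋖ c₂.toFun i.succ) →
    c₁.length = c₂.length

/-- A module is indecomposable if it is nonzero and is not the internal direct sum of two
nonzero submodules. -/
def ModuleIndecomposable (R : Type u) [CommRing R] (M : Type*) [AddCommGroup M]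
    [Module R M] : Prop :=
  Nontrivial M ∧ ∀ N₁ N₂ : Submodule R M, IsCompl N₁ N₂ → N₁ = ⊥ ∨ N₂ = ⊥

/-- A module is equidimensional if `dim R/P = dim M` for every minimal prime `P`
of its support (equivalently, of its annihilator). -/
def Equidimensional (R : Type u) [CommRing R] (M : Type*) [AddCommGroup M]
    [Module R M] : Prop :=
  ∀ P ∈ (Module.annihilator R M).minimalPrimes, ringKrullDim (R ⧸ P) = moduleDim R M

/-- A local ring is Cohen-Macaulay if its depth equals its Krull dimension. -/
def IsCMLocalRing (S : Type u) [CommRing S] [IsLocalRing S] : Prop :=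
  ((moduleDepth S (IsLocalRing.maximalIdeal S) S : ℕ∞) : WithBot ℕ∞) = ringKrullDim S

/-- A ring is Cohen-Macaulay if all its localizations at primes are Cohen-Macaulay local
rings. -/
def IsCMRing (S : Type u) [CommRing S] : Prop :=
  ∀ p : PrimeSpectrum S, IsCMLocalRing (Localization.AtPrime p.asIdeal)
/-- Coset prime avoidance: if an ideal `J` is not contained in any of finitely many
primes `P 0, ..., P (n-1)`, then for any `x` there is `t ∈ J` with `x + t` avoiding
all of them. -/
lemma coset_prime_avoid {R : Type u} [CommRing R] (J : Ideal R) (P : ℕ → Ideal R)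
    (hP : ∀ i, (P i).IsPrime) (hJ : ∀ i, ¬ J ≤ P i) (x : R) :
    ∀ n : ℕ, ∃ t ∈ J, ∀ j < n, x + t ∉ P j := by
  intro n
  induction n with
  | zero => exact ⟨0, J.zero_mem, fun j hj => absurd hj (Nat.not_lt_zero j)⟩
  | succ n ih =>
    obtain ⟨t, htJ, ht⟩ := ih
    classical
    by_cases hx : x + t ∈ P n
    · set S := (Finset.range n).filter (fun j => ¬ P j ≤ P n) with hS
      have hQ : ¬ (J * S.prod P) ≤ P n := by
        rw [(hP n).mul_le]
        push_neg
        refine ⟨hJ n, ?_⟩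
        rw [(hP n).prod_le]
        rintro ⟨j, hjS, hle⟩
        exact (Finset.mem_filter.mp hjS).2 hle
      obtain ⟨s, hsQ, hsP⟩ := SetLike.not_le_iff_exists.mp hQ
      have hsJ : s ∈ J := Ideal.mul_le_left hsQ
      have hsS : ∀ j ∈ S, s ∈ P j := fun j hj =>
        (le_trans Ideal.mul_le_right (le_trans Ideal.prod_le_inf (Finset.inf_le hj))) hsQ
      refine ⟨t + s, J.add_mem htJ hsJ, fun j hj => ?_⟩
      intro hmem
      rw [← add_assoc] at hmem
      rcases Nat.lt_succ_iff_lt_or_eq.mp hj with hjn | hjn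
      · by_cases hle : P j ≤ P n
        · exact hsP (by simpa using (P n).sub_mem (hle hmem) hx)
        · have hsj : s ∈ P j := hsS j (Finset.mem_filter.mpr ⟨Finset.mem_range.mpr hjn, hle⟩)
          exact ht j hjn (by simpa using (P j).sub_mem hmem hsj)
      · subst hjn
        exact hsP (by simpa using (P j).sub_mem hmem hx)
    · exact ⟨t, htJ, fun j hj => by
        rcases Nat.lt_succ_iff_lt_or_eq.mp hj with hj | rfl
        · exact ht j hj
        · exact hx⟩

/-- Krull intersection: in a Noetherian local ring, `⋂ₙ (J + m^n) = J`. -/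
lemma mem_of_forall_mem_sup_pow {R : Type u} [CommRing R] [IsNoetherianRing R] [IsLocalRing R]
    (J : Ideal R) (x : R)
    (hx : ∀ n : ℕ, x ∈ J ⊔ (IsLocalRing.maximalIdeal R) ^ n) : x ∈ J := by
  set m := IsLocalRing.maximalIdeal R
  have hbot : (⨅ n : ℕ, m ^ n • ⊤ : Submodule R (R ⧸ J)) = ⊥ :=
    Ideal.iInf_pow_smul_eq_bot_of_isLocalRing m
      (IsLocalRing.maximalIdeal.isMaximal R).ne_top
  have hmem : (Ideal.Quotient.mk J x : R ⧸ J) ∈ (⨅ n : ℕ, m ^ n • ⊤ : Submodule R (R ⧸ J)) := by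
    rw [Submodule.mem_iInf]
    intro n
    obtain ⟨a, ha, b, hb, rfl⟩ := Submodule.mem_sup.mp (hx n)
    have : (Ideal.Quotient.mk J (a + b) : R ⧸ J) = b • (1 : R ⧸ J) := by
      rw [map_add, Ideal.Quotient.eq_zero_iff_mem.mpr ha, zero_add, Algebra.smul_def, mul_one,
        Ideal.Quotient.algebraMap_eq]
    rw [this]
    exact Submodule.smul_mem_smul hb Submodule.mem_top
  rw [hbot] at hmem
  exact Ideal.Quotient.eq_zero_iff_mem.mp hmem

/-- The invariant for the inductive construction: at stage `n` we have an element of `I`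
that stays out of `P j + m ^ c` for all `j ≤ n`. -/
def avoidInv {R : Type u} [CommRing R] (I : Ideal R) (P : ℕ → Ideal R) (m : Ideal R)
    (n : ℕ) (p : R × ℕ) : Prop :=
  p.1 ∈ I ∧ n ≤ p.2 ∧ ∀ j ≤ n, p.1 ∉ P j + m ^ p.2

theorem stmt2 (R : Type u) [CommRing R] [IsNoetherianRing R] [IsLocalRing R]
    [IsAdicComplete (IsLocalRing.maximalIdeal R) R]
    (I : Ideal R) (P : ℕ → Ideal R) (hP : ∀ i, (P i).IsPrime)
    (hPI : ∀ i, ¬ I ≤ P i) :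
    ∃ x ∈ I, ∀ i, x ∉ P i := by
  by_cases hI : I = ⊤
  · exact ⟨1, hI ▸ Submodule.mem_top, fun i h1 => (hP i).ne_top ((Ideal.eq_top_iff_one _).mpr h1)⟩
  set m := IsLocalRing.maximalIdeal R with hm
  have hIm : I ≤ m := IsLocalRing.le_maximalIdeal hI
  have hPm : ∀ i, ¬ m ≤ P i := fun i h => hPI i (hIm.trans h)
  have hpow : ∀ (k : ℕ) (i : ℕ), ¬ m ^ k ≤ P i := by
    intro k i h
    rcases Nat.eq_zero_or_pos k with rfl | hk
    · exact (hP i).ne_top (top_le_iff.mp (by simpa using h))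
    · exact hPm i (((hP i).pow_le_iff hk.ne').mp h)
  have mono : ∀ (Q : Ideal R) (a b : ℕ), a ≤ b → Q + m ^ b ≤ Q + m ^ a := by
    intro Q a b h
    rw [Submodule.add_eq_sup, Submodule.add_eq_sup]
    exact sup_le_sup_left (Ideal.pow_le_pow_right h) Q
  -- separation: a point outside finitely many primes stays outside fattenings of them
  have sep : ∀ (y : R) (n : ℕ), (∀ j ≤ n, y ∉ P j) → ∃ c : ℕ, ∀ j ≤ n, y ∉ P j + m ^ c := by
    intro y n
    induction n with
    | zero =>
      intro hy
      by_contra hc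
      push_neg at hc
      refine hy 0 le_rfl (mem_of_forall_mem_sup_pow (P 0) y (fun k => ?_))
      obtain ⟨j, hj, hmem⟩ := hc k
      obtain rfl := Nat.le_zero.mp hj
      rwa [Submodule.add_eq_sup] at hmem
    | succ n ih =>
      intro hy
      obtain ⟨c₁, hc₁⟩ := ih (fun j hj => hy j (hj.trans (Nat.le_succ n)))
      have hex : ∃ c₂, y ∉ P (n + 1) + m ^ c₂ := by
        by_contra hc
        push_neg at hc
        refine hy (n + 1) le_rfl (mem_of_forall_mem_sup_pow _ y fun k => ?_)
        have := hc k
        rwa [Submodule.add_eq_sup] at this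
      obtain ⟨c₂, hc₂⟩ := hex
      refine ⟨max c₁ c₂, fun j hj hmem => ?_⟩
      rcases Nat.lt_succ_iff_lt_or_eq.mp (Nat.lt_succ_of_le hj) with hjn | hjn
      · exact hc₁ j (Nat.lt_succ_iff.mp hjn)
          (mono (P j) c₁ (max c₁ c₂) (le_max_left _ _) hmem)
      · subst hjn
        exact hc₂ (mono (P _) c₂ (max c₁ c₂) (le_max_right _ _) hmem)
  -- base case of the construction
  have base : ∃ p : R × ℕ, avoidInv I P m 0 p := by
    obtain ⟨t, htI, ht⟩ := coset_prime_avoid I P hP hPI 0 1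
    have ht0 : ∀ j ≤ 0, t ∉ P j := by
      intro j hj
      obtain rfl := Nat.le_zero.mp hj
      simpa using ht 0 Nat.one_pos
    obtain ⟨c, hc⟩ := sep t 0 ht0
    exact ⟨(t, c), htI, Nat.zero_le c, hc⟩
  -- inductive step
  have step : ∀ (n : ℕ) (p : R × ℕ), avoidInv I P m n p →
      ∃ q : R × ℕ, avoidInv I P m (n + 1) q ∧ q.1 - p.1 ∈ m ^ p.2 ∧ p.2 < q.2 := by
    rintro n ⟨xn, cn⟩ ⟨hpI, -, -⟩
    have hJ : ∀ i, ¬ m ^ cn * I ≤ P i := by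
      intro i h
      rcases (hP i).mul_le.mp h with h | h
      · exact hpow cn i h
      · exact hPI i h
    obtain ⟨t, htJ, ht⟩ := coset_prime_avoid (m ^ cn * I) P hP hJ xn (n + 2)
    have hyI : xn + t ∈ I := I.add_mem hpI (Ideal.mul_le_right htJ)
    have hyavoid : ∀ j ≤ n + 1, xn + t ∉ P j := fun j hj => ht j (Nat.lt_succ_of_le hj)
    obtain ⟨c₀, hc₀⟩ := sep (xn + t) (n + 1) hyavoid
    refine ⟨(xn + t, max c₀ (max (n + 1) (cn + 1))), ⟨hyI, le_trans (le_max_left _ _)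
      (le_max_right _ _), fun j hj hmem => hc₀ j hj
      (mono (P j) c₀ _ (le_max_left _ _) hmem)⟩, ?_, ?_⟩
    · simpa using Ideal.mul_le_left htJ
    · exact lt_of_lt_of_le (Nat.lt_succ_self cn) (le_trans (le_max_right _ _) (le_max_right _ _))
  -- construct the sequence
  let g : ∀ n : ℕ, {p : R × ℕ // avoidInv I P m n p} := fun n =>
    Nat.rec ⟨base.choose, base.choose_spec⟩
      (fun k ih => ⟨(step k ih.1 ih.2).choose, (step k ih.1 ih.2).choose_spec.1⟩) n
  set x : ℕ → R := fun n => (g n).1.1 with hx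
  set c : ℕ → ℕ := fun n => (g n).1.2 with hcdef
  have hxI : ∀ n, x n ∈ I := fun n => (g n).2.1
  have hcn : ∀ n, n ≤ c n := fun n => (g n).2.2.1
  have hav : ∀ n, ∀ j ≤ n, x n ∉ P j + m ^ c n := fun n => (g n).2.2.2
  have hgstep : ∀ n, x (n + 1) - x n ∈ m ^ c n ∧ c n < c (n + 1) := fun n =>
    (step n (g n).1 (g n).2).choose_spec.2
  have cmono : Monotone c := monotone_nat_of_le_succ (fun n => (hgstep n).2.le)
  have telescope : ∀ n k, x (n + k) - x n ∈ m ^ c n := by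
    intro n k
    induction k with
    | zero => simp
    | succ k ih =>
      have h2 : x (n + (k + 1)) - x n = (x (n + k + 1) - x (n + k)) + (x (n + k) - x n) := by
        rw [show n + (k + 1) = n + k + 1 from rfl]; ring
      rw [h2]
      exact (m ^ c n).add_mem
        (Ideal.pow_le_pow_right (cmono (Nat.le_add_right n k)) (hgstep (n + k)).1) ih
  have diff : ∀ a b, a ≤ b → x b - x a ∈ m ^ c a := by
    intro a b h
    obtain ⟨k, rfl⟩ := Nat.exists_eq_add_of_le h
    exact telescope a k
  have hsm : ∀ k : ℕ, (m ^ k • ⊤ : Submodule R R) = m ^ k := by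
    intro k
    rw [Ideal.smul_eq_mul, Ideal.mul_top]
  -- take the limit
  obtain ⟨L, hL⟩ := IsPrecomplete.prec (IsAdicComplete.toIsPrecomplete (I := m) (M := R))
    (f := x) (by
      intro a b hab
      rw [SModEq.sub_mem, hsm]
      have h1 : x b - x a ∈ m ^ a := Ideal.pow_le_pow_right (hcn a) (diff a b hab)
      simpa [neg_sub] using neg_mem h1)
  have hLn : ∀ n, x n - L ∈ m ^ n := by
    intro n
    have := hL n
    rwa [SModEq.sub_mem, hsm] at this
  refine ⟨L, ?_, ?_⟩
  · refine mem_of_forall_mem_sup_pow I L (fun n => ?_)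
    have : L = x n + (L - x n) := by ring
    rw [this]
    exact Submodule.add_mem_sup (hxI n) (by simpa [neg_sub] using neg_mem (hLn n))
  · intro i hLP
    have hd : L - x i ∈ m ^ c i := by
      have h1 : L - x (c i) ∈ m ^ c i := by simpa [neg_sub] using neg_mem (hLn (c i))
      have h2 : x (c i) - x i ∈ m ^ c i := diff i (c i) (hcn i)
      have h3 : L - x i = (L - x (c i)) + (x (c i) - x i) := by ring
      rw [h3]; exact (m ^ c i).add_mem h1 h2
    refine hav i i le_rfl ?_
    rw [Submodule.add_eq_sup, show x i = L + (x i - L) from by ring]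
    exact Submodule.add_mem_sup hLP (by simpa [neg_sub] using neg_mem hd)
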